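/- Let d, d' : S → ℝ be nonnegative with Σ_s d'(s) = 1, and let π, π' ∈ Π. Then Σ_{s,a} |d'(s) π'(a|s) − d(s) π(a|s)| ≤ max_{s} Σ_a |π'(a|s) − π(a|s)| + Σ_s |d'(s) − d(s)|. -/

import Mathlib

open Finset

/-- for nonnegative `d, d'` with `Σ_s d'(s) = 1` and policies `π, π'`,
`Σ_{s,a} |d'(s)π'(a|s) − d(s)π(a|s)| ≤ max_s Σ_a |π'(a|s) − π(a|s)| + Σ_s |d'(s) − d(s)|`. -/
theorem occupancy_product_l1_bound
    {S A : Type*} [Fintype S] [Fintype A] [Nonempty S] [Nonempty A]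
    (d d' : S → ℝ) (hd0 : ∀ s, 0 ≤ d s) (hd'0 : ∀ s, 0 ≤ d' s)
    (hd'1 : ∑ s, d' s = 1)
    (π π' : S → A → ℝ)
    (hπ0 : ∀ s a, 0 ≤ π s a) (hπ1 : ∀ s, ∑ a, π s a = 1)
    (hπ'0 : ∀ s a, 0 ≤ π' s a) (hπ'1 : ∀ s, ∑ a, π' s a = 1) :
    ∑ s, ∑ a, |d' s * π' s a - d s * π s a| ≤
      (univ.sup' univ_nonempty fun s => ∑ a, |π' s a - π s a|) +
        ∑ s, |d' s - d s| := by
  set M : ℝ := univ.sup' univ_nonempty fun s => ∑ a, |π' s a - π s a| with hM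
  have step : ∀ s, ∑ a, |d' s * π' s a - d s * π s a| ≤
      d' s * M + |d' s - d s| := by
    intro s
    have h1 : ∑ a, |d' s * π' s a - d s * π s a| ≤
        ∑ a, (d' s * |π' s a - π s a| + |d' s - d s| * π s a) := by
      apply Finset.sum_le_sum
      intro a _
      have : d' s * π' s a - d s * π s a
          = d' s * (π' s a - π s a) + (d' s - d s) * π s a := by ring
      rw [this]
      calc |d' s * (π' s a - π s a) + (d' s - d s) * π s a|
          ≤ |d' s * (π' s a - π s a)| + |(d' s - d s) * π s a| := abs_add_le _ _
        _ = d' s * |π' s a - π s a| + |d' s - d s| * π s a := by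
            rw [abs_mul, abs_mul, abs_of_nonneg (hd'0 s), abs_of_nonneg (hπ0 s a)]
    have h2 : ∑ a, (d' s * |π' s a - π s a| + |d' s - d s| * π s a)
        = d' s * (∑ a, |π' s a - π s a|) + |d' s - d s| := by
      rw [Finset.sum_add_distrib, ← Finset.mul_sum, ← Finset.mul_sum, hπ1 s, mul_one]
    have h3 : (∑ a, |π' s a - π s a|) ≤ M :=
      Finset.le_sup' (f := fun s => ∑ a, |π' s a - π s a|) (Finset.mem_univ s)
    calc ∑ a, |d' s * π' s a - d s * π s a|
        ≤ d' s * (∑ a, |π' s a - π s a|) + |d' s - d s| := h1.trans_eq h2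
      _ ≤ d' s * M + |d' s - d s| :=
          add_le_add_left (mul_le_mul_of_nonneg_left h3 (hd'0 s)) _
  calc ∑ s, ∑ a, |d' s * π' s a - d s * π s a|
      ≤ ∑ s, (d' s * M + |d' s - d s|) :=
        Finset.sum_le_sum fun s _ => step s
    _ = M + ∑ s, |d' s - d s| := by
        rw [Finset.sum_add_distrib, ← Finset.sum_mul, hd'1, one_mul]
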